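/- Let α ∈ (0,2) with α ≠ 1 and c > 0. The inflection point of SIGTRON lies in the interior of dom(σ_{α,c}): the point x_ip = −ln_{α,c}(cα/(2−α)) belongs to the interior of dom(σ_{α,c}), and for x in this interior the second derivative s_{α,c}''(x) vanishes if and only if x = x_ip. (When α = 1, the inflection point of s_{1,c}(x) = 1/(1+e^{−x}) is x = 0.) -/

import Mathlib

/-- `c_α = c^{1−α}/(α−1)` (real power). -/
noncomputable def cA (α c : ℝ) : ℝ := c ^ (1 - α) / (α - 1)

/-- SIGTRON: extended asymmetric sigmoid with Perceptron. -/
noncomputable def sigtron (α c : ℝ) (x : ℝ) : ℝ :=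
  if α = 1 then 1 / (1 + Real.exp (-x))
  else if α < 1 then
    if x ≤ -(cA α c) then 1 / (1 + (1 + x / cA α c) ^ ((1 : ℝ) / (1 - α))) else 1
  else
    if -(cA α c) < x then 1 / (1 + (1 + x / cA α c) ^ ((1 : ℝ) / (1 - α))) else 0


/-- Extended logarithm `ln_{α,c}(y) = c_α − y^{1−α}/(α−1)` for `α ≠ 1`
(`ln_{1,c}(y) = log(y/c)`). -/
noncomputable def lnA (α c : ℝ) (y : ℝ) : ℝ :=
  if α = 1 then Real.log (y / c) else cA α c - y ^ (1 - α) / (α - 1)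

open Real Filter

set_option maxHeartbeats 1600000 in
/-- For `α ∈ (0,2)`, `α ≠ 1` and `c > 0`, the point
`x_ip = −ln_{α,c}(cα/(2−α))` lies in the interior of `dom(σ_{α,c})`, and for `x` in
this interior the second derivative of SIGTRON vanishes iff `x = x_ip`. -/
theorem sigtron_stmt11 (α c : ℝ) (hα : α ∈ Set.Ioo (0 : ℝ) 2) (hα1 : α ≠ 1)
    (hc : 0 < c) (xip : ℝ) (hxip : xip = -lnA α c (c * α / (2 - α))) :
    ((α < 1 → xip < -(cA α c)) ∧ (1 < α → -(cA α c) < xip)) ∧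
    (∀ x, ((α < 1 → x < -(cA α c)) ∧ (1 < α → -(cA α c) < x)) →
      (iteratedDeriv 2 (sigtron α c) x = 0 ↔ x = xip)) := by
  obtain ⟨hα0, hα2⟩ := hα
  set a := cA α c with ha
  have hcpow : 0 < c ^ (1 - α) := Real.rpow_pos_of_pos hc _
  have hα1' : α - 1 ≠ 0 := sub_ne_zero.mpr hα1
  have h1α : (1 : ℝ) - α ≠ 0 := sub_ne_zero.mpr (Ne.symm hα1)
  have ha0 : a ≠ 0 := div_ne_zero (ne_of_gt hcpow) hα1'
  set P : ℝ := 1 / (1 - α) with hPdef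
  have hPne : P ≠ 0 := one_div_ne_zero h1α
  have hP1 : (1 - α) * P = 1 := by rw [hPdef]; field_simp
  set t : ℝ := α / (2 - α) with ht
  have h2α : (0 : ℝ) < 2 - α := by linarith
  have ht0 : 0 < t := div_pos hα0 h2α
  have htpos : 0 < t ^ (1 - α) := Real.rpow_pos_of_pos ht0 _
  -- closed form for xip
  have hxip' : xip = a * (t ^ (1 - α) - 1) := by
    rw [hxip, lnA, if_neg hα1]
    have hct : c * α / (2 - α) = c * t := by rw [ht]; ring
    rw [hct, Real.mul_rpow hc.le ht0.le, ha, cA]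
    field_simp
    ring
  -- case analysis on α < 1 vs 1 < α, for sign of a
  have hcases := lt_or_gt_of_ne hα1
  constructor
  · constructor
    · intro hlt
      have haneg : a < 0 := by
        rw [ha, cA]; exact div_neg_of_pos_of_neg hcpow (by linarith)
      nlinarith [mul_neg_of_neg_of_pos haneg htpos]
    · intro hgt
      have hapos : 0 < a := by
        rw [ha, cA]; exact div_pos hcpow (by linarith)
      nlinarith [mul_pos hapos htpos]
  · intro x hx
    -- x is in the open set S = {y | 0 < 1 + y / a}
    have hmem : ∀ y : ℝ, ((α < 1 → y < -a) ∧ (1 < α → -a < y)) → 0 < 1 + y / a := by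
      intro y hy
      have h1 : 1 + y / a = (a + y) / a := by field_simp
      rw [h1, div_pos_iff]
      rcases hcases with h | h
      · have haneg : a < 0 := by
          rw [ha, cA]; exact div_neg_of_pos_of_neg hcpow (by linarith)
        right; exact ⟨by linarith [hy.1 h], haneg⟩
      · have hapos : 0 < a := by
          rw [ha, cA]; exact div_pos hcpow (by linarith)
        left; exact ⟨by linarith [hy.2 h], hapos⟩
    have hu : 0 < 1 + x / a := hmem x hx
    set S : Set ℝ := {y : ℝ | 0 < 1 + y / a} with hSdef
    have hS : IsOpen S := isOpen_lt continuous_const (by fun_prop)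
    have hxS : x ∈ S := hu
    -- the smooth local model g and its derivatives
    set g : ℝ → ℝ := fun y => (1 + (1 + y / a) ^ P)⁻¹ with hgdef
    set D1 : ℝ → ℝ := fun y =>
      -(P / a) * ((1 + y / a) ^ (P - 1) * (((1 + (1 + y / a) ^ P) ^ 2)⁻¹)) with hD1def
    -- sigtron agrees with g on S
    have heq : ∀ y ∈ S, sigtron α c y = g y := by
      intro y hy
      have huy : 0 < 1 + y / a := hy
      have h1 : 1 + y / a = (a + y) / a := by field_simp
      rw [sigtron, if_neg hα1, hgdef]
      rcases hcases with h | h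
      · have haneg : a < 0 := by
          rw [ha, cA]; exact div_neg_of_pos_of_neg hcpow (by linarith)
        have hay : a + y < 0 := by
          by_contra hcon
          push_neg at hcon
          rw [h1] at huy
          rcases div_pos_iff.mp huy with ⟨h2, _⟩ | ⟨_, h3⟩
          · linarith
          · linarith
        rw [if_pos h, if_pos (by linarith : y ≤ -a), one_div]
      · have hapos : 0 < a := by
          rw [ha, cA]; exact div_pos hcpow (by linarith)
        have hay : 0 < a + y := by
          by_contra hcon
          push_neg at hcon
          rw [h1] at huy
          rcases div_pos_iff.mp huy with ⟨_, h2⟩ | ⟨h3, _⟩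
          · linarith
          · linarith
        rw [if_neg (by linarith : ¬ α < 1), if_pos (by linarith : -a < y), one_div]
    -- g has derivative D1 on S
    have hg : ∀ y ∈ S, HasDerivAt g (D1 y) y := by
      intro y hy
      have huy : 0 < 1 + y / a := hy
      have hu' : HasDerivAt (fun z : ℝ => 1 + z / a) a⁻¹ y := by
        simpa [one_div] using ((hasDerivAt_id y).div_const a).const_add 1
      have hr : HasDerivAt (fun z : ℝ => (1 + z / a) ^ P)
          (a⁻¹ * P * (1 + y / a) ^ (P - 1)) y :=
        hu'.rpow_const (Or.inl huy.ne')
      have hq : HasDerivAt (fun z : ℝ => 1 + (1 + z / a) ^ P)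
          (a⁻¹ * P * (1 + y / a) ^ (P - 1)) y := hr.const_add 1
      have hqne : 1 + (1 + y / a) ^ P ≠ 0 := by positivity
      have := hq.inv hqne
      exact this.congr_deriv (by simp only [hD1def]; ring)
    -- second derivative of g at x
    have hu' : HasDerivAt (fun z : ℝ => 1 + z / a) a⁻¹ x := by
      simpa [one_div] using ((hasDerivAt_id x).div_const a).const_add 1
    have hqne : 1 + (1 + x / a) ^ P ≠ 0 := by positivity
    set E : ℝ := -(P / a ^ 2) * ((1 + x / a) ^ (P - 2) *
        (((1 + (1 + x / a) ^ P) ^ 3)⁻¹ * ((P - 1) - (P + 1) * (1 + x / a) ^ P))) with hEdef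
    have h1 : HasDerivAt (fun z : ℝ => (1 + z / a) ^ (P - 1))
        (a⁻¹ * (P - 1) * (1 + x / a) ^ (P - 1 - 1)) x :=
      hu'.rpow_const (Or.inl hu.ne')
    have hrP : HasDerivAt (fun z : ℝ => (1 + z / a) ^ P)
        (a⁻¹ * P * (1 + x / a) ^ (P - 1)) x := hu'.rpow_const (Or.inl hu.ne')
    have hq : HasDerivAt (fun z : ℝ => 1 + (1 + z / a) ^ P)
        (a⁻¹ * P * (1 + x / a) ^ (P - 1)) x := hrP.const_add 1
    have hq2 : HasDerivAt (fun z : ℝ => (1 + (1 + z / a) ^ P) ^ 2)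
        ((2 : ℕ) * (1 + (1 + x / a) ^ P) ^ (2 - 1) * (a⁻¹ * P * (1 + x / a) ^ (P - 1))) x :=
      hq.pow 2
    have h3 := hq2.inv (pow_ne_zero 2 hqne)
    have h4 := (h1.mul h3).const_mul (-(P / a))
    -- rewrite the messy derivative value into E
    have e1 : (1 + x / a) ^ (P - 1) = (1 + x / a) ^ (P - 2) * (1 + x / a) := by
      rw [show P - 1 = (P - 2) + 1 by ring, Real.rpow_add hu, Real.rpow_one]
    have e2 : (1 + x / a) ^ P = (1 + x / a) ^ (P - 2) * (1 + x / a) ^ (2 : ℕ) := by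
      rw [show P = (P - 2) + 2 by ring, Real.rpow_add hu, Real.rpow_two, sq]
      ring
    have hVE : -(P / a) *
        ((a⁻¹ * (P - 1) * (1 + x / a) ^ (P - 1 - 1)) * ((1 + (1 + x / a) ^ P) ^ 2)⁻¹ +
          (1 + x / a) ^ (P - 1) *
            (-((2 : ℕ) * (1 + (1 + x / a) ^ P) ^ (2 - 1) * (a⁻¹ * P * (1 + x / a) ^ (P - 1))) /
              ((1 + (1 + x / a) ^ P) ^ 2) ^ 2)) = E := by
      have hqne2 : 1 + (1 + x / a) ^ (P - 2) * (1 + x / a) ^ (2 : ℕ) ≠ 0 := by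
        rw [← e2]; exact hqne
      rw [hEdef, show P - 1 - 1 = P - 2 by ring, e1, e2]
      set A := (1 + x / a) ^ (P - 2) with hA
      set u := 1 + x / a with hudef
      field_simp
      ring
    have h4' : HasDerivAt D1 E x := by
      rw [← hVE]
      exact h4
    -- identify the iterated derivative
    have hSmem : S ∈ nhds x := hS.mem_nhds hxS
    have heq' : sigtron α c =ᶠ[nhds x] g := eventuallyEq_of_mem hSmem heq
    have hD1ev : deriv (sigtron α c) =ᶠ[nhds x] D1 := by
      filter_upwards [hSmem] with y hy
      have : sigtron α c =ᶠ[nhds y] g := eventuallyEq_of_mem (hS.mem_nhds hy) heq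
      rw [this.deriv_eq, (hg y hy).deriv]
    have hkey : iteratedDeriv 2 (sigtron α c) x = E := by
      rw [show (2 : ℕ) = 1 + 1 from rfl, iteratedDeriv_succ, iteratedDeriv_one]
      rw [hD1ev.deriv_eq, h4'.deriv]
    rw [hkey]
    -- Now: E = 0 ↔ x = xip
    have hApos : 0 < (1 + x / a) ^ (P - 2) := Real.rpow_pos_of_pos hu _
    have hq3 : ((1 + (1 + x / a) ^ P) ^ 3)⁻¹ ≠ 0 := by positivity
    have hcoef : -(P / a ^ 2) ≠ 0 := by
      simp only [neg_ne_zero]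
      exact div_ne_zero hPne (pow_ne_zero 2 ha0)
    have hEiff : E = 0 ↔ (P - 1) - (P + 1) * (1 + x / a) ^ P = 0 := by
      rw [hEdef]
      constructor
      · intro h
        rcases mul_eq_zero.mp h with h | h
        · exact absurd h hcoef
        rcases mul_eq_zero.mp h with h | h
        · exact absurd h hApos.ne'
        rcases mul_eq_zero.mp h with h | h
        · exact absurd h hq3
        · exact h
      · intro h; rw [h]; ring
    have hP1ne : P + 1 ≠ 0 := by
      have : P + 1 = (2 - α) / (1 - α) := by rw [hPdef]; field_simp; ring
      rw [this]
      exact div_ne_zero (ne_of_gt h2α) h1α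
    have hPt : P - 1 = (P + 1) * t := by
      rw [hPdef, ht]; field_simp; ring
    have hB : (P - 1) - (P + 1) * (1 + x / a) ^ P = 0 ↔ (1 + x / a) ^ P = t := by
      rw [hPt]
      constructor
      · intro h
        have : (P + 1) * (1 + x / a) ^ P = (P + 1) * t := by linarith
        exact (mul_left_cancel₀ hP1ne this)
      · intro h; rw [h]; ring
    have hC : (1 + x / a) ^ P = t ↔ 1 + x / a = t ^ (1 - α) := by
      constructor
      · intro h
        have := congrArg (fun z : ℝ => z ^ (1 - α)) h
        rwa [← Real.rpow_mul hu.le, mul_comm P (1 - α), hP1, Real.rpow_one] at this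
      · intro h
        rw [h, ← Real.rpow_mul ht0.le, hP1, Real.rpow_one]
    have hD : 1 + x / a = t ^ (1 - α) ↔ x = xip := by
      rw [hxip']
      constructor
      · intro h
        have hx' : x = a * ((1 + x / a) - 1) := by field_simp; ring
        rw [hx', h]
      · intro h
        rw [h]
        field_simp; ring
    rw [hEiff, hB, hC, hD]
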